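/- Let H, K be finite-dimensional inner product spaces and T : H → K an injective linear map. Let δ, ε > 0 with 4δ < ε. Then the maximal cardinality of an ε-separated subset of T^{-1}(δ·Ball(K)) with respect to the norm of H is at most Det_{4δ/ε}(T)^{-1}, where Det_c(T) denotes the product of the eigenvalues of |T| = (T*T)^{1/2} lying in the interval (0, c], counted with multiplicity (an empty product being 1). -/

import Mathlib

open Matrix

open Matrix MeasureTheory Finset Pointwise ENNReal

lemma ellipsoid_step {b mm c v : ℝ} (hb : 0 < b) (hmm : 0 < mm)
    (hbm : 2 * b ^ 2 + 1 / 2 ≤ mm ^ 2) :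
    (c + v) ^ 2 / mm ^ 2 ≤ c ^ 2 / b ^ 2 / 2 + 2 * v ^ 2 := by
  have hb' : b ≠ 0 := hb.ne'
  set u := c / (2 * b) with hu
  have hc : c = u * (2 * b) := by rw [hu, div_mul_cancel₀ _ (mul_ne_zero two_ne_zero hb')]
  have h1 : (c + v) ^ 2 / mm ^ 2 ≤ (c + v) ^ 2 / (2 * b ^ 2 + 1 / 2) := by
    apply div_le_div_of_nonneg_left (sq_nonneg _) (by positivity) hbm
  refine h1.trans ?_
  have h2 : c ^ 2 / b ^ 2 / 2 = 2 * u ^ 2 := by rw [hc]; field_simp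
  rw [h2, div_le_iff₀ (by positivity), hc]
  nlinarith [sq_nonneg (u - 2 * v * b)]

theorem packing_count {ι : Type*} [Fintype ι] [DecidableEq ι]
    (b mm : ι → ℝ) (hb : ∀ i, 0 < b i) (hmm : ∀ i, 0 < mm i)
    (hbm : ∀ i, 2 * b i ^ 2 + 1 / 2 ≤ mm i ^ 2)
    (A : Set (ι → ℝ))
    (hA : ∀ p ∈ A, ∑ i, p i ^ 2 / b i ^ 2 ≤ 1)
    (hsep : ∀ p ∈ A, ∀ r ∈ A, p ≠ r → 1 < ∑ i, (p i - r i) ^ 2) :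
    A.Finite ∧ (A.ncard : ℝ) ≤ ∏ i, (2 * mm i) := by
  classical
  set d : ℕ := Module.finrank ℝ (ι → ℝ) with hd
  have hdcard : d = Fintype.card ι := Module.finrank_fintype_fun_eq_card ℝ
  -- basic sets
  set K : Set (ι → ℝ) := {p | ∑ i, p i ^ 2 ≤ 1} with hK
  set O : Set (ι → ℝ) := {p | ∑ i, p i ^ 2 / mm i ^ 2 ≤ 1} with hO
  set U : (ι → ℝ) → Set (ι → ℝ) := fun c => {p | ∑ i, (p i - c i) ^ 2 ≤ 1 / 4} with hU
  have contsum : ∀ c : ι → ℝ, ∀ w : ι → ℝ, Continuous fun p : ι → ℝ =>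
      ∑ i, (p i - c i) ^ 2 / w i := by
    intro c w
    exact continuous_finset_sum _ fun i _ =>
      (((continuous_apply i).sub continuous_const).pow 2).div_const _
  -- closedness
  have hKclosed : IsClosed K := by
    have := contsum 0 1
    simp only [Pi.zero_apply, sub_zero, Pi.one_apply, div_one] at this
    exact isClosed_le this continuous_const
  have hOclosed : IsClosed O := by
    have := contsum 0 (fun i => mm i ^ 2)
    simp only [Pi.zero_apply, sub_zero] at this
    exact isClosed_le this continuous_const
  have hUclosed : ∀ c, IsClosed (U c) := by
    intro c
    have := contsum c 1
    simp only [Pi.one_apply, div_one] at this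
    exact isClosed_le this continuous_const
  -- compactness of bounded closed ellipsoid-like sets
  have compact_aux : ∀ (S : Set (ι → ℝ)) (R : ℝ), IsClosed S →
      (∀ p ∈ S, ∀ i, |p i| ≤ R) → IsCompact S := by
    intro S R hSc hSb
    apply IsCompact.of_isClosed_subset (isCompact_Icc (a := fun _ : ι => -R)
      (b := fun _ : ι => R)) hSc
    intro p hp
    constructor
    · intro i; exact (abs_le.1 (hSb p hp i)).1
    · intro i; exact (abs_le.1 (hSb p hp i)).2
  have hKcomp : IsCompact K := by
    apply compact_aux K 1 hKclosed
    intro p hp i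
    have h1 : p i ^ 2 ≤ 1 := by
      refine le_trans ?_ hp
      exact Finset.single_le_sum (f := fun i => p i ^ 2) (fun j _ => sq_nonneg _) (mem_univ i)
    nlinarith [abs_nonneg (p i), sq_abs (p i)]
  have hOcomp : IsCompact O := by
    apply compact_aux O (∑ i, mm i) hOclosed
    intro p hp i
    have h1 : p i ^ 2 / mm i ^ 2 ≤ 1 := by
      refine le_trans ?_ hp
      exact Finset.single_le_sum (f := fun i => p i ^ 2 / mm i ^ 2)
        (fun j _ => div_nonneg (sq_nonneg _) (sq_nonneg _)) (mem_univ i)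
    have h2 : p i ^ 2 ≤ mm i ^ 2 := by
      rw [div_le_one (pow_pos (hmm i) 2)] at h1; exact h1
    have h3 : |p i| ≤ mm i := by
      nlinarith [abs_nonneg (p i), sq_abs (p i), hmm i]
    refine h3.trans ?_
    exact Finset.single_le_sum (f := fun j => mm j) (fun j _ => (hmm j).le) (mem_univ i)
  -- volume of K: positive and finite
  have hKne : volume K ≠ 0 := by
    have hVopen : IsOpen {p : ι → ℝ | ∑ i, p i ^ 2 < 1} := by
      have := contsum 0 1
      simp only [Pi.zero_apply, sub_zero, Pi.one_apply, div_one] at this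
      exact isOpen_lt this continuous_const
    have h0 : (0 : ι → ℝ) ∈ {p : ι → ℝ | ∑ i, p i ^ 2 < 1} := by
      simp
    have hsub : {p : ι → ℝ | ∑ i, p i ^ 2 < 1} ⊆ K := by
      intro p hp
      show ∑ i, p i ^ 2 ≤ 1
      exact le_of_lt hp
    have := hVopen.measure_pos volume ⟨0, h0⟩
    exact fun h => absurd (measure_mono_null hsub h) (ne_of_gt this)
  have hKfin : volume K ≠ ⊤ := hKcomp.measure_lt_top.ne
  -- volume of U c
  have volU : ∀ c : ι → ℝ, volume (U c) = ENNReal.ofReal ((2 : ℝ)⁻¹ ^ d) * volume K := by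
    intro c
    have himg : U c = (fun p => c + p) '' ((2 : ℝ)⁻¹ • K) := by
      ext p
      simp only [Set.mem_image]
      constructor
      · intro hp
        refine ⟨fun j => p j - c j, ?_, by funext j; simp⟩
        rw [Set.mem_smul_set_iff_inv_smul_mem₀ (by norm_num : ((2:ℝ)⁻¹) ≠ 0)]
        show (((2:ℝ)⁻¹)⁻¹ • fun j => p j - c j) ∈ K
        have hmem : ∑ i, ((2:ℝ) * (p i - c i)) ^ 2 ≤ 1 := by
          have h4 : ∑ i, ((2:ℝ) * (p i - c i)) ^ 2 = 4 * ∑ i, (p i - c i) ^ 2 := by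
            rw [Finset.mul_sum]; exact Finset.sum_congr rfl fun i _ => by ring
          have hp' : ∑ i, (p i - c i) ^ 2 ≤ 1 / 4 := hp
          rw [h4]; linarith
        show ∑ i, ((((2:ℝ)⁻¹)⁻¹ • fun j => p j - c j) i) ^ 2 ≤ 1
        simpa [Pi.smul_apply, smul_eq_mul] using hmem
      · rintro ⟨q, hq, rfl⟩
        rw [Set.mem_smul_set_iff_inv_smul_mem₀ (by norm_num : ((2:ℝ)⁻¹) ≠ 0)] at hq
        have hq' : ∑ i, ((2:ℝ) * q i) ^ 2 ≤ 1 := by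
          have := hq
          rw [inv_inv] at this; exact this
        show ∑ i, (c i + q i - c i) ^ 2 ≤ 1 / 4
        have hterm : ∀ i, (c i + q i - c i) ^ 2 = ((2:ℝ) * q i) ^ 2 / 4 := fun i => by ring
        rw [Finset.sum_congr rfl fun i _ => hterm i, ← Finset.sum_div]
        linarith
    rw [himg]
    have htrans : (fun p => c + p) '' ((2 : ℝ)⁻¹ • K) =
        (fun p => -c + p) ⁻¹' ((2 : ℝ)⁻¹ • K) := by
      ext p
      simp only [Set.mem_image, Set.mem_preimage]
      constructor
      · rintro ⟨q, hq, rfl⟩; simpa using hq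
      · intro hp; exact ⟨-c + p, hp, by abel⟩
    rw [htrans, measure_preimage_add, Measure.addHaar_smul_of_nonneg volume (by norm_num) K]
  -- volume of O
  have volO : volume O = ENNReal.ofReal (∏ i, mm i) * volume K := by
    have himg : O = (Matrix.toLin' (Matrix.diagonal mm)) '' K := by
      ext p
      simp only [Set.mem_image]
      constructor
      · intro hp
        refine ⟨fun i => p i / mm i, ?_, ?_⟩
        · show ∑ i, (p i / mm i) ^ 2 ≤ 1
          have : ∀ i, (p i / mm i) ^ 2 = p i ^ 2 / mm i ^ 2 := fun i => by
            rw [div_pow]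
          rw [Finset.sum_congr rfl fun i _ => this i]
          exact hp
        · show Matrix.mulVec (Matrix.diagonal mm) (fun i => p i / mm i) = p
          funext i
          rw [Matrix.mulVec_diagonal, mul_comm, div_mul_cancel₀ _ (hmm i).ne']
      · rintro ⟨q, hq, rfl⟩
        show ∑ i, (Matrix.mulVec (Matrix.diagonal mm) q i) ^ 2 / mm i ^ 2 ≤ 1
        have : ∀ i, (Matrix.mulVec (Matrix.diagonal mm) q i) ^ 2 / mm i ^ 2 = q i ^ 2 := by
          intro i
          rw [Matrix.mulVec_diagonal, mul_pow, mul_comm, mul_div_assoc,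
            div_self (pow_ne_zero 2 (hmm i).ne'), mul_one]
        rw [Finset.sum_congr rfl fun i _ => this i]
        exact hq
    rw [himg]
    have hlin : Matrix.toLin' (Matrix.diagonal mm) = 
      (Matrix.toLin' (Matrix.diagonal mm) : (ι → ℝ) →ₗ[ℝ] (ι → ℝ)) := rfl
    rw [show ((Matrix.toLin' (Matrix.diagonal mm)) '' K) = 
      ((Matrix.toLin' (Matrix.diagonal mm) : (ι → ℝ) →ₗ[ℝ] (ι → ℝ)) : (ι → ℝ) → (ι → ℝ)) '' K from rfl]
    rw [Measure.addHaar_image_linearMap]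
    congr 1
    rw [LinearMap.det_toLin', Matrix.det_diagonal]
    rw [abs_of_pos (Finset.prod_pos fun i _ => hmm i)]
  -- U c ⊆ O for centers in A
  have hUO : ∀ c ∈ A, U c ⊆ O := by
    intro c hc p hp
    have hp' : ∑ i, (p i - c i) ^ 2 ≤ 1 / 4 := hp
    show ∑ i, p i ^ 2 / mm i ^ 2 ≤ 1
    have key : ∀ i, p i ^ 2 / mm i ^ 2 ≤ c i ^ 2 / b i ^ 2 / 2 + 2 * (p i - c i) ^ 2 := by
      intro i
      have := ellipsoid_step (c := c i) (v := p i - c i) (hb i) (hmm i) (hbm i)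
      simpa using this
    calc ∑ i, p i ^ 2 / mm i ^ 2 ≤ ∑ i, (c i ^ 2 / b i ^ 2 / 2 + 2 * (p i - c i) ^ 2) :=
          Finset.sum_le_sum fun i _ => key i
      _ = (∑ i, c i ^ 2 / b i ^ 2) / 2 + 2 * ∑ i, (p i - c i) ^ 2 := by
          rw [Finset.sum_add_distrib, Finset.sum_div, ← Finset.mul_sum]
      _ ≤ 1 / 2 + 2 * (1 / 4) := by
          have h1 := hA c hc
          have h2 : (∑ i, c i ^ 2 / b i ^ 2) / 2 ≤ 1 / 2 := by linarith
          have h3 : 2 * ∑ i, (p i - c i) ^ 2 ≤ 2 * (1 / 4) := by linarith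
          linarith
      _ = 1 := by norm_num
  -- disjointness
  have hdisj : A.PairwiseDisjoint U := by
    intro x hx y hy hxy
    rw [Function.onFun, Set.disjoint_left]
    intro p hpx hpy
    have h1 : ∑ i, (p i - x i) ^ 2 ≤ 1 / 4 := hpx
    have h2 : ∑ i, (p i - y i) ^ 2 ≤ 1 / 4 := hpy
    have hcs := Finset.sum_mul_sq_le_sq_mul_sq Finset.univ (fun i => x i - p i)
      (fun i => p i - y i)
    have h1' : ∑ i, (x i - p i) ^ 2 ≤ 1 / 4 := by
      have : ∀ i, (x i - p i) ^ 2 = (p i - x i) ^ 2 := fun i => by ring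
      rw [Finset.sum_congr rfl fun i _ => this i]; exact h1
    have hcross : ∑ i, (x i - p i) * (p i - y i) ≤ 1 / 4 := by
      nlinarith [Finset.sum_nonneg (fun i (_ : i ∈ Finset.univ) => sq_nonneg (x i - p i)),
        Finset.sum_nonneg (fun i (_ : i ∈ Finset.univ) => sq_nonneg (p i - y i))]
    have hxy2 : ∑ i, (x i - y i) ^ 2 ≤ 1 := by
      have expand : ∀ i, (x i - y i) ^ 2 =
          (x i - p i) ^ 2 + 2 * ((x i - p i) * (p i - y i)) + (p i - y i) ^ 2 := by
        intro i; ring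
      rw [Finset.sum_congr rfl fun i _ => expand i]
      rw [Finset.sum_add_distrib, Finset.sum_add_distrib, ← Finset.mul_sum]
      linarith
    exact absurd hxy2 (not_le.2 (hsep x hx y hy hxy))
  -- the counting estimate for finite subsets
  set v : ℝ≥0∞ := ENNReal.ofReal ((2 : ℝ)⁻¹ ^ d) * volume K with hv
  set V : ℝ≥0∞ := ENNReal.ofReal (∏ i, mm i) * volume K with hVdef
  have main : ∀ F : Finset (ι → ℝ), ↑F ⊆ A → (F.card : ℝ≥0∞) * v ≤ V := by
    intro F hF
    have hdF : (↑F : Set (ι → ℝ)).PairwiseDisjoint U := hdisj.subset hF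
    have hmeas : ∀ x ∈ F, MeasurableSet (U x) := fun x _ => (hUclosed x).measurableSet
    have hunion := measure_biUnion_finset (μ := volume) hdF hmeas
    have hsub : (⋃ x ∈ F, U x) ⊆ O := by
      refine Set.iUnion₂_subset fun x hx => hUO x (hF hx)
    calc (F.card : ℝ≥0∞) * v = ∑ _x ∈ F, v := by rw [Finset.sum_const, nsmul_eq_mul]
      _ = ∑ x ∈ F, volume (U x) := Finset.sum_congr rfl fun x _ => (volU x).symm
      _ = volume (⋃ x ∈ F, U x) := hunion.symm
      _ ≤ volume O := measure_mono hsub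
      _ = V := volO
  have hv0 : v ≠ 0 := by
    apply mul_ne_zero
    · simp only [ne_eq, ENNReal.ofReal_eq_zero, not_le]
      positivity
    · exact hKne
  have hvtop : v ≠ ⊤ := by
    apply ENNReal.mul_ne_top ENNReal.ofReal_ne_top hKfin
  have hVtop : V ≠ ⊤ := ENNReal.mul_ne_top ENNReal.ofReal_ne_top hKfin
  -- finiteness
  have hfin : A.Finite := by
    by_contra hinf
    have hinf' : A.Infinite := hinf
    obtain ⟨n, hn⟩ := ENNReal.exists_nat_gt (show V / v ≠ ⊤ from by
      exact (ENNReal.div_lt_top hVtop hv0).ne)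
    obtain ⟨F, hFsub, hFcard⟩ := hinf'.exists_subset_card_eq n
    have := main F hFsub
    rw [hFcard] at this
    have hlt : V < (n : ℝ≥0∞) * v := by
      rwa [ENNReal.div_lt_iff (Or.inl hv0) (Or.inl hvtop)] at hn
    exact absurd this (not_le.2 hlt)
  refine ⟨hfin, ?_⟩
  -- cardinality bound
  have : (hfin.toFinset.card : ℝ≥0∞) * v ≤ V := main hfin.toFinset (by simp)
  have hcard : A.ncard = hfin.toFinset.card := Set.ncard_eq_toFinset_card A hfin
  rw [hcard]
  have hle := ENNReal.toReal_mono hVtop this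
  have ha : (0:ℝ) ≤ (2:ℝ)⁻¹ ^ d := by positivity
  rw [hv, hVdef, ENNReal.toReal_mul, ENNReal.toReal_mul, ENNReal.toReal_mul,
    ENNReal.toReal_natCast, ENNReal.toReal_ofReal ha,
    ENNReal.toReal_ofReal (le_of_lt (Finset.prod_pos fun i _ => hmm i))] at hle
  set k := (volume K).toReal with hk
  have hkpos : 0 < k := ENNReal.toReal_pos hKne hKfin
  rw [← mul_assoc] at hle
  have h2 : (hfin.toFinset.card : ℝ) * (2:ℝ)⁻¹ ^ d ≤ ∏ i, mm i :=
    le_of_mul_le_mul_right hle hkpos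
  have hpow : (2:ℝ)⁻¹ ^ d * 2 ^ d = 1 := by
    rw [← mul_pow]; norm_num
  have h3 : (hfin.toFinset.card : ℝ) ≤ (∏ i, mm i) * 2 ^ d := by
    have h2pos : (0:ℝ) < 2 ^ d := by positivity
    calc (hfin.toFinset.card : ℝ) = (hfin.toFinset.card : ℝ) * ((2:ℝ)⁻¹ ^ d * 2 ^ d) := by
          rw [hpow, mul_one]
      _ = ((hfin.toFinset.card : ℝ) * (2:ℝ)⁻¹ ^ d) * 2 ^ d := by ring
      _ ≤ (∏ i, mm i) * 2 ^ d := by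
          exact mul_le_mul_of_nonneg_right h2 (le_of_lt h2pos)
  refine h3.trans_eq ?_
  rw [Finset.prod_mul_distrib, Finset.prod_const, mul_comm, Finset.card_univ, ← hdcard]

set_option maxHeartbeats 2000000 in
/-- Let `T : ℝ^n → ℝ^m` be an injective linear map (given by a matrix) and `δ, ε > 0`
with `4δ < ε`. Then any `ε`-separated subset of `T^{-1}(δ·Ball)` is finite, of
cardinality at most `Det_{4δ/ε}(T)⁻¹`, where `Det_c(T)` is the product of the
eigenvalues of `|T| = (TᵀT)^{1/2}` (i.e. the singular values of `T`) lying in `(0, c]`,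
counted with multiplicity. -/
theorem separated_in_approximate_kernel_card_bound {m n : ℕ}
    (T : Matrix (Fin m) (Fin n) ℝ) (hinj : Function.Injective T.mulVec)
    (δ ε : ℝ) (hδ : 0 < δ) (hε : 0 < ε) (h4 : 4 * δ < ε)
    (hH : (Tᴴ * T).IsHermitian)
    (E : Set (Fin n → ℝ))
    (hE : ∀ x ∈ E, Real.sqrt (∑ i, (T.mulVec x i) ^ 2) ≤ δ)
    (hsep : ∀ x ∈ E, ∀ y ∈ E, x ≠ y → ε < Real.sqrt (∑ i, (x i - y i) ^ 2)) :
    E.Finite ∧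
      (E.ncard : ℝ) ≤
        (∏ i ∈ Finset.univ.filter
            (fun i => Real.sqrt (hH.eigenvalues i) ≤ 4 * δ / ε),
          Real.sqrt (hH.eigenvalues i))⁻¹ := by
  classical
  have hTH : Tᴴ = Tᵀ := by ext i j; simp [Matrix.conjTranspose_apply]
  set lam : Fin n → ℝ := hH.eigenvalues with hlam
  set B := hH.eigenvectorBasis with hBdef
  set e : (Fin n → ℝ) ≃ₗ[ℝ] EuclideanSpace ℝ (Fin n) :=
    (WithLp.linearEquiv 2 ℝ (Fin n → ℝ)).symm with hedef
  set Y : (Fin n → ℝ) → Fin n → ℝ := fun z i => B.repr (e z) i with hY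
  have hinner : ∀ u w : EuclideanSpace ℝ (Fin n), (inner ℝ u w : ℝ) = ∑ i, u i * w i := by
    intro u w; simp [PiLp.inner_apply, RCLike.inner_apply, conj_trivial, mul_comm]
  have hAT : (Tᴴ * T)ᵀ = Tᴴ * T := by
    have h1 : (Tᴴ * T)ᴴ = (Tᴴ * T)ᵀ := by ext i j; simp [Matrix.conjTranspose_apply]
    rw [← h1]; exact hH
  -- spectral action on coordinates
  have hYA : ∀ (z : Fin n → ℝ) (i : Fin n), Y ((Tᴴ * T) *ᵥ z) i = lam i * Y z i := by
    intro z i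
    have h1 : Y ((Tᴴ * T) *ᵥ z) i = (inner ℝ (B i) (e ((Tᴴ * T) *ᵥ z)) : ℝ) :=
      B.repr_apply_apply _ i
    rw [h1, hinner]
    have h2 : ∑ j, (B i) j * (e ((Tᴴ * T) *ᵥ z)) j
        = (⇑(B i) : Fin n → ℝ) ⬝ᵥ ((Tᴴ * T) *ᵥ z) := rfl
    rw [h2, Matrix.dotProduct_mulVec]
    have h3 : (⇑(B i) : Fin n → ℝ) ᵥ* (Tᴴ * T) = (Tᴴ * T) *ᵥ ⇑(B i) := by
      conv_lhs => rw [← hAT]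
      rw [Matrix.vecMul_transpose]
    rw [h3, hH.mulVec_eigenvectorBasis i, smul_dotProduct]
    have h4 : (⇑(B i) : Fin n → ℝ) ⬝ᵥ z = Y z i := by
      have h5 : Y z i = (inner ℝ (B i) (e z) : ℝ) := B.repr_apply_apply _ i
      rw [h5, hinner]; rfl
    rw [smul_eq_mul, h4]
  -- quadratic form identity
  have hquad : ∀ z : Fin n → ℝ, ∑ i, lam i * Y z i ^ 2 = ∑ j, (T *ᵥ z) j ^ 2 := by
    intro z
    calc ∑ i, lam i * Y z i ^ 2 = ∑ i, Y z i * Y ((Tᴴ * T) *ᵥ z) i := by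
          refine Finset.sum_congr rfl fun i _ => ?_
          rw [hYA z i]; ring
      _ = (inner ℝ (B.repr (e z)) (B.repr (e ((Tᴴ * T) *ᵥ z))) : ℝ) := (hinner _ _).symm
      _ = (inner ℝ (e z) (e ((Tᴴ * T) *ᵥ z)) : ℝ) := B.repr.inner_map_map _ _
      _ = ∑ j, z j * ((Tᴴ * T) *ᵥ z) j := hinner _ _
      _ = z ⬝ᵥ ((Tᴴ * T) *ᵥ z) := rfl
      _ = (T *ᵥ z) ⬝ᵥ (T *ᵥ z) := by
          rw [← Matrix.mulVec_mulVec, hTH, Matrix.dotProduct_mulVec, Matrix.vecMul_transpose]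
      _ = ∑ j, (T *ᵥ z) j ^ 2 := by simp [dotProduct, sq]
  -- Parseval
  have hpars : ∀ z : Fin n → ℝ, ∑ i, Y z i ^ 2 = ∑ j, z j ^ 2 := by
    intro z
    have h1 : (inner ℝ (B.repr (e z)) (B.repr (e z)) : ℝ) = (inner ℝ (e z) (e z) : ℝ) :=
      B.repr.inner_map_map _ _
    rw [hinner, hinner] at h1
    have h2 : ∑ i, Y z i * Y z i = ∑ j, z j * z j := h1
    simpa [pow_two] using h2
  -- eigenvalues are positive
  have hlampos : ∀ i, 0 < lam i := by
    intro i
    have hYB : ∀ k, Y (⇑(B i)) k = EuclideanSpace.single i (1:ℝ) k := by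
      intro k
      show B.repr (e (⇑(B i))) k = _
      rw [show e (⇑(B i)) = B i from rfl, B.repr_self]
    have hsum1 : ∑ k, lam k * Y (⇑(B i)) k ^ 2 = lam i := by
      rw [Finset.sum_congr rfl fun k _ => by rw [hYB k]]
      rw [Finset.sum_eq_single i]
      · simp [EuclideanSpace.single_apply]
      · intro k _ hk; simp [EuclideanSpace.single_apply, hk]
      · intro h; exact absurd (Finset.mem_univ i) h
    have hli : lam i = ∑ j, (T *ᵥ ⇑(B i)) j ^ 2 := by rw [← hsum1, hquad]
    rcases lt_or_ge 0 (lam i) with h | h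
    · exact h
    · exfalso
      have h0 : ∑ j, (T *ᵥ ⇑(B i)) j ^ 2 = 0 := by
        have hnn : 0 ≤ ∑ j, (T *ᵥ ⇑(B i)) j ^ 2 :=
          Finset.sum_nonneg fun j _ => sq_nonneg _
        linarith [hli]
      have hz : T *ᵥ ⇑(B i) = 0 := by
        funext j
        have := (Finset.sum_eq_zero_iff_of_nonneg
          (fun j (_ : j ∈ Finset.univ) => sq_nonneg ((T *ᵥ ⇑(B i)) j))).1 h0 j (Finset.mem_univ j)
        exact (pow_eq_zero_iff two_ne_zero).1 this
      have hB0 : (⇑(B i) : Fin n → ℝ) = 0 := by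
        apply hinj
        rw [hz, Matrix.mulVec_zero]
      have hone : ∑ k, Y (⇑(B i)) k ^ 2 = 1 := by
        rw [Finset.sum_congr rfl fun k _ => by rw [hYB k]]
        rw [Finset.sum_eq_single i]
        · simp [EuclideanSpace.single_apply]
        · intro k _ hk; simp [EuclideanSpace.single_apply, hk]
        · intro h; exact absurd (Finset.mem_univ i) h
      rw [hpars] at hone
      rw [hB0] at hone
      simp at hone
  have hσpos : ∀ i, 0 < Real.sqrt (lam i) := fun i => Real.sqrt_pos.2 (hlampos i)
  -- constants
  set c : ℝ := 4 * δ / ε with hc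
  have hc0 : 0 < c := by positivity
  have hc1 : c < 1 := by rw [hc, div_lt_one hε]; linarith
  have hεδ : 16 * δ ^ 2 < ε ^ 2 := by nlinarith
  set ct2 : ℝ := min (c ^ 2) (1 / 2) with hct2
  have hct2pos : 0 < ct2 := lt_min (by positivity) (by norm_num)
  have hct2half : 2 * ct2 ≤ 1 := by
    have := min_le_right (c ^ 2) (1 / 2); linarith
  set s2 : ℝ := ε ^ 2 - 4 * δ ^ 2 / ct2 with hs2def
  have hs2ge : 8 * δ ^ 2 ≤ s2 := by
    rcases le_total (c ^ 2) (1 / 2) with h | h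
    · have hmineq : ct2 = c ^ 2 := min_eq_left h
      have hceq : 4 * δ ^ 2 / ct2 = ε ^ 2 / 4 := by
        rw [hmineq, hc]; field_simp
      rw [hs2def, hceq]; nlinarith
    · have hmineq : ct2 = 1 / 2 := min_eq_right h
      rw [hs2def, hmineq]; nlinarith
  have hs2pos : 0 < s2 := by nlinarith
  set M : Fin n → ℝ := fun i => (1 - lam i / ct2) / s2 with hM
  set S : Finset (Fin n) := Finset.univ.filter (fun i => lam i < ct2) with hS
  have hMpos : ∀ i ∈ S, 0 < M i := by
    intro i hi
    rw [hS, Finset.mem_filter] at hi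
    have ht : lam i / ct2 < 1 := (div_lt_one hct2pos).2 hi.2
    show 0 < (1 - lam i / ct2) / s2
    exact div_pos (by linarith) hs2pos
  have hconv : ∀ i ∈ S, 8 * δ ^ 2 * M i + 2 * lam i ≤ 1 := by
    intro i hi
    rw [hS, Finset.mem_filter] at hi
    have ht : lam i / ct2 < 1 := (div_lt_one hct2pos).2 hi.2
    have h1 : 0 ≤ 1 - lam i / ct2 := by linarith
    have h2 : 8 * δ ^ 2 * M i ≤ 1 - lam i / ct2 := by
      have he1 : 8 * δ ^ 2 * M i = (1 - lam i / ct2) * (8 * δ ^ 2 / s2) := by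
        show 8 * δ ^ 2 * ((1 - lam i / ct2) / s2) = _
        ring
      rw [he1]
      have h3 : 8 * δ ^ 2 / s2 ≤ 1 := (div_le_one hs2pos).2 hs2ge
      nlinarith
    have h4 : 2 * lam i ≤ lam i / ct2 := by
      rw [le_div_iff₀ hct2pos]
      nlinarith [(hlampos i).le]
    linarith
  -- packing data
  set bb : {i // i ∈ S} → ℝ := fun i => Real.sqrt (M i.1) * δ / Real.sqrt (lam i.1) with hbbdef
  set mm : {i // i ∈ S} → ℝ := fun i => 1 / (2 * Real.sqrt (lam i.1)) with hmmdef
  have hbbpos : ∀ i, 0 < bb i := fun i => by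
    show 0 < Real.sqrt (M i.1) * δ / Real.sqrt (lam i.1)
    exact div_pos (mul_pos (Real.sqrt_pos.2 (hMpos i.1 i.2)) hδ) (hσpos i.1)
  have hmmpos : ∀ i, 0 < mm i := fun i => by
    show 0 < 1 / (2 * Real.sqrt (lam i.1))
    have := hσpos i.1
    positivity
  have hbb2 : ∀ i : {i // i ∈ S}, bb i ^ 2 = M i.1 * δ ^ 2 / lam i.1 := by
    intro i
    show (Real.sqrt (M i.1) * δ / Real.sqrt (lam i.1)) ^ 2 = _
    rw [div_pow, mul_pow, Real.sq_sqrt (hMpos i.1 i.2).le, Real.sq_sqrt (hlampos i.1).le]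
  have hmm2 : ∀ i : {i // i ∈ S}, mm i ^ 2 = 1 / (4 * lam i.1) := by
    intro i
    show (1 / (2 * Real.sqrt (lam i.1))) ^ 2 = _
    rw [div_pow, mul_pow, Real.sq_sqrt (hlampos i.1).le]
    norm_num
  have hbm : ∀ i, 2 * bb i ^ 2 + 1 / 2 ≤ mm i ^ 2 := by
    intro i
    rw [hbb2 i, hmm2 i]
    have hlam1 := hlampos i.1
    rw [le_div_iff₀ (by positivity : (0:ℝ) < 4 * lam i.1)]
    have hkey : (2 * (M i.1 * δ ^ 2 / lam i.1) + 1 / 2) * (4 * lam i.1)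
        = 8 * δ ^ 2 * M i.1 + 2 * lam i.1 := by
      field_simp
      ring
    rw [hkey]
    exact hconv i.1 i.2
  set Q : (Fin n → ℝ) → ({i // i ∈ S} → ℝ) :=
    fun x i => Real.sqrt (M i.1) * Y x i.1 with hQ
  -- coordinates of differences
  have hYsub : ∀ (x x' : Fin n → ℝ) (i : Fin n), Y (x - x') i = Y x i - Y x' i := by
    intro x x' i
    show B.repr (e (x - x')) i = B.repr (e x) i - B.repr (e x') i
    rw [map_sub, map_sub]
    rfl
  -- norms of T-images
  have hTbound : ∀ x ∈ E, ∑ j, (T *ᵥ x) j ^ 2 ≤ δ ^ 2 := by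
    intro x hx
    have h1 := hE x hx
    have h2 : 0 ≤ ∑ j, (T *ᵥ x) j ^ 2 := Finset.sum_nonneg fun j _ => sq_nonneg _
    nlinarith [Real.sq_sqrt h2, Real.sqrt_nonneg (∑ j, (T *ᵥ x) j ^ 2)]
  -- separation certificate
  have hcert : ∀ x ∈ E, ∀ x' ∈ E, x ≠ x' →
      1 < ∑ i : {i // i ∈ S}, (Q x i - Q x' i) ^ 2 := by
    intro x hx x' hx' hne
    set z : Fin n → ℝ := x - x' with hz
    have hTz2 : ∑ j, (T *ᵥ z) j ^ 2 ≤ 4 * δ ^ 2 := by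
      have hPd := hTbound x hx
      have hRd := hTbound x' hx'
      have hP0 : 0 ≤ ∑ j, (T *ᵥ x) j ^ 2 := Finset.sum_nonneg fun j _ => sq_nonneg _
      have hR0 : 0 ≤ ∑ j, (T *ᵥ x') j ^ 2 := Finset.sum_nonneg fun j _ => sq_nonneg _
      have hcs := Finset.sum_mul_sq_le_sq_mul_sq Finset.univ
        (fun j => (T *ᵥ x) j) (fun j => (T *ᵥ x') j)
      have hzz : T *ᵥ z = T *ᵥ x - T *ᵥ x' := by rw [hz, Matrix.mulVec_sub]
      have hexp : ∑ j, (T *ᵥ z) j ^ 2 = (∑ j, (T *ᵥ x) j ^ 2) + (∑ j, (T *ᵥ x') j ^ 2)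
          - 2 * ∑ j, (T *ᵥ x) j * (T *ᵥ x') j := by
        rw [hzz]
        rw [Finset.sum_congr rfl fun j _ => show ((T *ᵥ x - T *ᵥ x') j) ^ 2
          = (T *ᵥ x) j ^ 2 + (T *ᵥ x') j ^ 2 - 2 * ((T *ᵥ x) j * (T *ᵥ x') j) from by
            simp [Pi.sub_apply]; ring]
        rw [Finset.sum_sub_distrib, Finset.sum_add_distrib, ← Finset.mul_sum]
      rw [hexp]
      nlinarith [hcs, hPd, hRd, hP0, hR0,
        sq_nonneg ((∑ j, (T *ᵥ x) j * (T *ᵥ x') j) + δ ^ 2),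
        mul_nonneg (sub_nonneg.2 hPd) hR0]
    have hz2 : ε ^ 2 < ∑ j, z j ^ 2 := by
      have h1 := hsep x hx x' hx' hne
      have h2 : 0 ≤ ∑ j, (x j - x' j) ^ 2 := Finset.sum_nonneg fun j _ => sq_nonneg _
      have h3 : ε ^ 2 < ∑ j, (x j - x' j) ^ 2 := by
        nlinarith [Real.sq_sqrt h2, Real.sqrt_nonneg (∑ j, (x j - x' j) ^ 2), hε]
      have h4 : ∀ j, z j = x j - x' j := fun j => rfl
      rw [Finset.sum_congr rfl fun j _ => by rw [h4 j]]
      exact h3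
    have hquadz : ∑ i, lam i * Y z i ^ 2 ≤ 4 * δ ^ 2 := by rw [hquad z]; exact hTz2
    set KK : ℝ := ∑ i ∈ S, M i * Y z i ^ 2 with hKK
    have hsplit : ∑ i, Y z i ^ 2 ≤ s2 * KK + (1 / ct2) * ∑ i, lam i * Y z i ^ 2 := by
      have hsum1 := Finset.sum_filter_add_sum_filter_not Finset.univ
        (fun i => lam i < ct2) (fun i => Y z i ^ 2)
      have hsum2 := Finset.sum_filter_add_sum_filter_not Finset.univ
        (fun i => lam i < ct2) (fun i => lam i * Y z i ^ 2)
      have hpart1 : ∑ i ∈ Finset.univ.filter (fun i => lam i < ct2), Y z i ^ 2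
          = s2 * KK + (1 / ct2) * ∑ i ∈ Finset.univ.filter (fun i => lam i < ct2),
            lam i * Y z i ^ 2 := by
        rw [hKK, ← hS, Finset.mul_sum, Finset.mul_sum, ← Finset.sum_add_distrib]
        refine Finset.sum_congr (by rw [hS]) fun i hi => ?_
        have hMi : s2 * (M i * Y z i ^ 2) = (1 - lam i / ct2) * Y z i ^ 2 := by
          show s2 * ((1 - lam i / ct2) / s2 * Y z i ^ 2) = _
          field_simp
        rw [hMi]
        field_simp
        ring
      have hpart2 : ∑ i ∈ Finset.univ.filter (fun i => ¬ lam i < ct2), Y z i ^ 2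
          ≤ (1 / ct2) * ∑ i ∈ Finset.univ.filter (fun i => ¬ lam i < ct2),
            lam i * Y z i ^ 2 := by
        rw [Finset.mul_sum]
        refine Finset.sum_le_sum fun i hi => ?_
        rw [Finset.mem_filter] at hi
        have hge : ct2 ≤ lam i := not_lt.1 hi.2
        have h5 : 1 ≤ lam i / ct2 := (one_le_div hct2pos).2 hge
        have h6 : 0 ≤ Y z i ^ 2 := sq_nonneg _
        have h7 : 1 / ct2 * (lam i * Y z i ^ 2) = (lam i / ct2) * Y z i ^ 2 := by ring
        rw [h7]
        nlinarith
      have hlamnn : 0 ≤ ∑ i ∈ Finset.univ.filter (fun i => ¬ lam i < ct2),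
          lam i * Y z i ^ 2 :=
        Finset.sum_nonneg fun i _ => mul_nonneg (hlampos i).le (sq_nonneg _)
      calc ∑ i, Y z i ^ 2
          = (∑ i ∈ Finset.univ.filter (fun i => lam i < ct2), Y z i ^ 2)
            + ∑ i ∈ Finset.univ.filter (fun i => ¬ lam i < ct2), Y z i ^ 2 := hsum1.symm
        _ ≤ (s2 * KK + (1 / ct2) * ∑ i ∈ Finset.univ.filter (fun i => lam i < ct2),
              lam i * Y z i ^ 2)
            + (1 / ct2) * ∑ i ∈ Finset.univ.filter (fun i => ¬ lam i < ct2),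
              lam i * Y z i ^ 2 := by
            rw [hpart1]; linarith [hpart2]
        _ = s2 * KK + (1 / ct2) * ∑ i, lam i * Y z i ^ 2 := by
            rw [← hsum2]; ring
    have hKKgt : 1 < KK := by
      have h1 : ε ^ 2 < s2 * KK + (1 / ct2) * (4 * δ ^ 2) := by
        have h2 : (1 / ct2) * ∑ i, lam i * Y z i ^ 2 ≤ (1 / ct2) * (4 * δ ^ 2) := by
          have : 0 ≤ 1 / ct2 := by positivity
          nlinarith [hquadz]
        calc ε ^ 2 < ∑ j, z j ^ 2 := hz2
          _ = ∑ i, Y z i ^ 2 := (hpars z).symm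
          _ ≤ s2 * KK + (1 / ct2) * ∑ i, lam i * Y z i ^ 2 := hsplit
          _ ≤ s2 * KK + (1 / ct2) * (4 * δ ^ 2) := by linarith
      have h2 : (1 / ct2) * (4 * δ ^ 2) = ε ^ 2 - s2 := by
        rw [hs2def]; field_simp; ring
      rw [h2] at h1
      have h3 : s2 * 1 < s2 * KK := by linarith
      exact (mul_lt_mul_iff_right₀ hs2pos).1 h3
    have hfinal : ∑ i : {i // i ∈ S}, (Q x i - Q x' i) ^ 2 = KK := by
      rw [hKK, ← Finset.sum_coe_sort S (fun i => M i * Y z i ^ 2)]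
      refine Finset.sum_congr rfl fun i _ => ?_
      have hMi' : Real.sqrt (M i.1) ^ 2 = M i.1 := Real.sq_sqrt (hMpos i.1 i.2).le
      have hstep : Q x i - Q x' i = Real.sqrt (M i.1) * Y z i.1 := by
        show Real.sqrt (M i.1) * Y x i.1 - Real.sqrt (M i.1) * Y x' i.1 = _
        rw [hz, hYsub x x' i.1]
        ring
      rw [hstep, mul_pow, hMi']
    rw [hfinal]
    exact hKKgt
  -- centers lie in the ellipsoid
  have hcent : ∀ p ∈ Q '' E, ∑ i : {i // i ∈ S}, p i ^ 2 / bb i ^ 2 ≤ 1 := by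
    rintro p ⟨x, hx, rfl⟩
    have hterm : ∀ i : {i // i ∈ S}, Q x i ^ 2 / bb i ^ 2 = lam i.1 * Y x i.1 ^ 2 / δ ^ 2 := by
      intro i
      have hMi' : Real.sqrt (M i.1) ^ 2 = M i.1 := Real.sq_sqrt (hMpos i.1 i.2).le
      have hQ2 : Q x i ^ 2 = M i.1 * Y x i.1 ^ 2 := by
        show (Real.sqrt (M i.1) * Y x i.1) ^ 2 = _
        rw [mul_pow, hMi']
      rw [hQ2, hbb2 i]
      have hM0 := (hMpos i.1 i.2).ne'
      have hlam_ne := (hlampos i.1).ne'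
      field_simp
    rw [Finset.sum_congr rfl fun i _ => hterm i]
    have hsum3 : ∑ i : {i // i ∈ S}, lam i.1 * Y x i.1 ^ 2 / δ ^ 2
        = (∑ i ∈ S, lam i * Y x i ^ 2) / δ ^ 2 := by
      rw [Finset.sum_div, ← Finset.sum_coe_sort S (fun i => lam i * Y x i ^ 2 / δ ^ 2)]
    rw [hsum3]
    have hle : ∑ i ∈ S, lam i * Y x i ^ 2 ≤ ∑ i, lam i * Y x i ^ 2 :=
      Finset.sum_le_sum_of_subset_of_nonneg (Finset.subset_univ S)
        (fun i _ _ => mul_nonneg (hlampos i).le (sq_nonneg _))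
    have hEx : ∑ i, lam i * Y x i ^ 2 ≤ δ ^ 2 := by
      rw [hquad x]; exact hTbound x hx
    rw [div_le_one (by positivity : (0:ℝ) < δ ^ 2)]
    linarith
  -- apply the packing bound
  obtain ⟨hfinQ, hcardQ⟩ := packing_count bb mm hbbpos hmmpos hbm (Q '' E) hcent (by
    rintro p ⟨x, hx, rfl⟩ r ⟨x', hx', rfl⟩ hne
    have hxx' : x ≠ x' := by rintro rfl; exact hne rfl
    exact hcert x hx x' hx' hxx')
  have hQinj : Set.InjOn Q E := by
    intro x hx x' hx' hQeq
    by_contra hne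
    have h1 := hcert x hx x' hx' hne
    rw [hQeq] at h1
    simp only [sub_self] at h1
    norm_num at h1

  have hEfin : E.Finite := Set.Finite.of_finite_image hfinQ hQinj
  refine ⟨hEfin, ?_⟩
  have hcardeq : (Q '' E).ncard = E.ncard := Set.ncard_image_of_injOn hQinj
  rw [← hcardeq]
  refine hcardQ.trans ?_
  have hmmeq : ∀ i : {i // i ∈ S}, 2 * mm i = (Real.sqrt (lam i.1))⁻¹ := by
    intro i
    show 2 * (1 / (2 * Real.sqrt (lam i.1))) = _
    have := (hσpos i.1).ne'
    field_simp
  rw [Finset.prod_congr rfl fun i _ => hmmeq i, Finset.prod_inv_distrib]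
  rw [Finset.prod_coe_sort S (fun i => Real.sqrt (lam i))]
  have hSF : S ⊆ Finset.univ.filter (fun i => Real.sqrt (lam i) ≤ c) := by
    intro i hi
    rw [hS, Finset.mem_filter] at hi
    rw [Finset.mem_filter]
    refine ⟨Finset.mem_univ i, ?_⟩
    have h2 : lam i ≤ c ^ 2 := le_trans hi.2.le (min_le_left _ _)
    have h3 := Real.sqrt_le_sqrt h2
    rwa [Real.sqrt_sq hc0.le] at h3
  have hFpos : 0 < ∏ i ∈ Finset.univ.filter (fun i => Real.sqrt (lam i) ≤ c),
      Real.sqrt (lam i) := Finset.prod_pos fun i _ => hσpos i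
  have hSpos : 0 < ∏ i ∈ S, Real.sqrt (lam i) := Finset.prod_pos fun i _ => hσpos i
  have hFS : ∏ i ∈ Finset.univ.filter (fun i => Real.sqrt (lam i) ≤ c), Real.sqrt (lam i)
      ≤ ∏ i ∈ S, Real.sqrt (lam i) := by
    rw [← Finset.prod_sdiff hSF]
    have h1 : ∏ i ∈ Finset.univ.filter (fun i => Real.sqrt (lam i) ≤ c) \ S,
        Real.sqrt (lam i) ≤ 1 := by
      apply Finset.prod_le_one
      · intro i _; exact (hσpos i).le
      · intro i hi
        have hiF := (Finset.mem_sdiff.1 hi).1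
        rw [Finset.mem_filter] at hiF
        exact le_trans hiF.2 hc1.le
    nlinarith
  exact inv_anti₀ hFpos hFS
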